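/- Let $I : [T_0, T_1] \to \mathbb{R}$ be bounded, nonnegative, with $I(T_0)=0$, satisfying $I(t) \le I(t_1) + N_1 \int_{t_1}^{t_2} I(s)\,ds + N_2$ for all $T_0 \le t_1 \le t \le t_2 \le T_1$. If $a > 0$ satisfies $a \le 1/(100 N_1)$, then for every $k \ge 0$ with $T_0 + (k+1)a \le T_1$, one has $\sup_{T_0 + ka \le t \le T_0 + (k+1)a} I(t) \le 2 N_2 + 2 I(T_0 + ka)$. -/

import Mathlib

open MeasureTheory Set intervalIntegral

/-- Inductive step of the Gronwall-type lemma: on each subinterval of length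
`a ≤ 1/(100 N₁)`, one has `sup_{[T₀+ka, T₀+(k+1)a]} I ≤ 2 N₂ + 2 I(T₀ + ka)`. -/
theorem stmt_1 (N₁ N₂ : ℝ) (hN₁ : 0 ≤ N₁) (hN₂ : 0 ≤ N₂)
    (T₀ T₁ : ℝ) (hT : T₀ < T₁) (I : ℝ → ℝ)
    (hbdd : ∃ M : ℝ, ∀ t ∈ Icc T₀ T₁, |I t| ≤ M)
    (hnonneg : ∀ t ∈ Icc T₀ T₁, 0 ≤ I t)
    (hI0 : I T₀ = 0)
    (hineq : ∀ t₁ t t₂ : ℝ, T₀ ≤ t₁ → t₁ ≤ t → t ≤ t₂ → t₂ ≤ T₁ →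
      I t ≤ I t₁ + N₁ * ∫ s in t₁..t₂, I s + N₂)
    (a : ℝ) (ha : 0 < a) (ha' : a ≤ 1 / (100 * N₁)) (k : ℕ)
    (hk : T₀ + (k + 1) * a ≤ T₁) :
    ∀ t ∈ Icc (T₀ + k * a) (T₀ + (k + 1) * a),
      I t ≤ 2 * N₂ + 2 * I (T₀ + k * a) := by
  set c := T₀ + k * a with hc
  set d := T₀ + (k + 1) * a with hd
  have hka : (0:ℝ) ≤ (k : ℝ) * a := by positivity
  have hcd : c < d := by
    simp only [hc, hd]
    nlinarith
  have hT0c : T₀ ≤ c := by simp only [hc]; linarith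
  have hdT1 : d ≤ T₁ := hk
  have hsub : Icc c d ⊆ Icc T₀ T₁ := Icc_subset_Icc hT0c hdT1
  obtain ⟨M, hM⟩ := hbdd
  have hbdd' : BddAbove (I '' Icc c d) := by
    refine ⟨M, ?_⟩
    rintro y ⟨t, ht, rfl⟩
    exact (abs_le.mp (hM t (hsub ht))).2
  have hcmem : c ∈ Icc c d := ⟨le_refl c, hcd.le⟩
  set B := sSup (I '' Icc c d) with hB
  have hIcB : I c ≤ B := le_csSup hbdd' ⟨c, hcmem, rfl⟩
  have hIc0 : 0 ≤ I c := hnonneg c (hsub hcmem)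
  have hB0 : 0 ≤ B := hIc0.trans hIcB
  have hNa : N₁ * a ≤ 1 / 100 := by
    rcases eq_or_lt_of_le hN₁ with h | h
    · rw [← h]; norm_num
    · have h2 := mul_le_mul_of_nonneg_left ha' h.le
      calc N₁ * a ≤ N₁ * (1 / (100 * N₁)) := h2
        _ = 1 / 100 := by field_simp
  have hdca : d - c = a := by simp only [hc, hd]; ring
  have hint : ∀ t ∈ Icc c d, I t ≤ I c + N₁ * ((B + N₂) * a) := by
    intro t ht
    have h1 : I t ≤ I c + N₁ * ∫ s in c..d, I s + N₂ :=
      hineq c t d hT0c ht.1 ht.2 hdT1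
    have h2 : ‖∫ s in c..d, I s + N₂‖ ≤ (B + N₂) * |d - c| := by
      apply intervalIntegral.norm_integral_le_of_norm_le_const (f := fun s => I s + N₂)
      intro s hs
      rw [Set.uIoc_of_le hcd.le] at hs
      have hs' : s ∈ Icc c d := ⟨hs.1.le, hs.2⟩
      have h0 : 0 ≤ I s := hnonneg s (hsub hs')
      have hIsB : I s ≤ B := le_csSup hbdd' ⟨s, hs', rfl⟩
      rw [Real.norm_eq_abs, abs_of_nonneg (by linarith)]
      linarith
    rw [Real.norm_eq_abs, hdca, abs_of_pos ha] at h2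
    have h3 : (∫ s in c..d, I s + N₂) ≤ (B + N₂) * a := (abs_le.mp h2).2
    nlinarith [mul_le_mul_of_nonneg_left h3 hN₁]
  have hBle : B ≤ I c + N₁ * ((B + N₂) * a) := by
    refine csSup_le ⟨I c, ⟨c, hcmem, rfl⟩⟩ ?_
    rintro y ⟨t, ht, rfl⟩
    exact hint t ht
  intro t ht
  have hItB : I t ≤ B := le_csSup hbdd' ⟨t, ht, rfl⟩
  have key : N₁ * ((B + N₂) * a) ≤ (1 / 100) * (B + N₂) := by
    have : N₁ * ((B + N₂) * a) = (N₁ * a) * (B + N₂) := by ring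
    rw [this]
    exact mul_le_mul_of_nonneg_right hNa (by linarith)
  linarith
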